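/- Let v : [0,1] → ℝ be continuous, C¹ with v'(0) = 0, satisfy (τ v'(τ))' = -Ha²·τ·(1 - v(τ)/(1 - α v(τ))) on (0,1) with v(1) = 0, α > 0, Ha² > 0, and 0 ≤ v < 1/(1+α) on (0,1). Then v attains its maximum over [0,1] at τ = 0, i.e. v(0) = sup_{τ ∈ [0,1]} v(τ). -/
import Mathlib


theorem stmt_16 (α Ha : ℝ) (v v' : ℝ → ℝ)
    (hα : 0 < α) (hHa : 0 < Ha ^ 2)
    (hc : ContinuousOn v (Set.Icc 0 1))
    (hd : ∀ τ ∈ Set.Icc (0 : ℝ) 1, HasDerivAt v (v' τ) τ)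
    (hv'c : ContinuousOn v' (Set.Icc 0 1))
    (hbc0 : v' 0 = 0) (hbc1 : v 1 = 0)
    (heq : ∀ τ ∈ Set.Ioo (0 : ℝ) 1,
      HasDerivAt (fun s => s * v' s) (-Ha ^ 2 * τ * (1 - v τ / (1 - α * v τ))) τ)
    (hbnd : ∀ τ ∈ Set.Ioo (0 : ℝ) 1, 0 ≤ v τ ∧ v τ < 1 / (1 + α)) :
    IsGreatest (v '' Set.Icc (0 : ℝ) 1) (v 0) := by
  have hint : interior (Set.Icc (0:ℝ) 1) = Set.Ioo 0 1 := interior_Icc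
  -- the RHS of the ODE is nonpositive on (0,1)
  have hrhs : ∀ τ ∈ Set.Ioo (0:ℝ) 1, -Ha ^ 2 * τ * (1 - v τ / (1 - α * v τ)) ≤ 0 := by
    intro τ hτ
    obtain ⟨h0, h1⟩ := hbnd τ hτ
    have h1α : 0 < 1 + α := by linarith
    have hv1 : v τ * (1 + α) < 1 := by
      calc v τ * (1 + α) < (1 / (1 + α)) * (1 + α) := by
            apply mul_lt_mul_of_pos_right h1 h1α
        _ = 1 := by field_simp
    have hpos : 0 < 1 - α * v τ := by nlinarith
    have hlt : v τ / (1 - α * v τ) < 1 := by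
      rw [div_lt_one hpos]; nlinarith
    have : 0 ≤ 1 - v τ / (1 - α * v τ) := by linarith
    have hτ0 : 0 < τ := hτ.1
    nlinarith [mul_nonneg (mul_nonneg (sq_nonneg Ha) hτ0.le) this]
  -- g(τ) = τ * v'(τ) is antitone on [0,1]
  have hgcont : ContinuousOn (fun s => s * v' s) (Set.Icc 0 1) :=
    continuousOn_id.mul hv'c
  have hganti : AntitoneOn (fun s => s * v' s) (Set.Icc 0 1) := by
    apply antitoneOn_of_deriv_nonpos (convex_Icc 0 1) hgcont
    · rw [hint]
      intro x hx
      exact (heq x hx).differentiableAt.differentiableWithinAt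
    · rw [hint]
      intro x hx
      rw [(heq x hx).deriv]
      exact hrhs x hx
  -- hence v' ≤ 0 on (0,1)
  have hv'nonpos : ∀ τ ∈ Set.Ioo (0:ℝ) 1, v' τ ≤ 0 := by
    intro τ hτ
    have h := hganti (Set.left_mem_Icc.mpr zero_le_one)
      ⟨hτ.1.le, hτ.2.le⟩ hτ.1.le
    simp only [zero_mul, hbc0] at h
    have hτ0 : 0 < τ := hτ.1
    nlinarith
  -- v is antitone on [0,1]
  have hanti : AntitoneOn v (Set.Icc 0 1) := by
    apply antitoneOn_of_deriv_nonpos (convex_Icc 0 1) hc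
    · rw [hint]
      intro x hx
      exact (hd x ⟨hx.1.le, hx.2.le⟩).differentiableAt.differentiableWithinAt
    · rw [hint]
      intro x hx
      rw [(hd x ⟨hx.1.le, hx.2.le⟩).deriv]
      exact hv'nonpos x hx
  constructor
  · exact ⟨0, Set.left_mem_Icc.mpr zero_le_one, rfl⟩
  · rintro y ⟨τ, hτ, rfl⟩
    exact hanti (Set.left_mem_Icc.mpr zero_le_one) hτ hτ.1
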